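/- Let R = R₁ × R₂ be a product of G-graded rings and M = M₁ × M₂. If N₁ is a graded 2-absorbing coprimary R₁-submodule of M₁ and N = N₁ × {0}, then Ann_R(N) is a graded 2-absorbing primary ideal of R. -/

import Mathlib

open DirectSum Pointwise

variable {G : Type} [AddGroup G] [DecidableEq G]
variable {R : Type} [CommRing R] (𝒜 : G → AddSubgroup R) [GradedRing 𝒜]
variable {M : Type} [AddCommGroup M] [Module R M] (ℳ : G → AddSubgroup M)
  [SetLike.GradedSMul 𝒜 ℳ] [DirectSum.Decomposition ℳ]

/-- A submodule is graded if it contains every homogeneous component of each of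
its elements. -/
def IsGradedSubmodule (N : Submodule R M) : Prop :=
  ∀ (g : G) (m : M), m ∈ N → (DirectSum.decompose ℳ m g : M) ∈ N

/-- The graded radical of an ideal: all `r` such that for each `g` some positive
power of the degree-`g` component of `r` lies in `P`. -/
def gradRad (P : Ideal R) : Set R :=
  {r : R | ∀ g : G, ∃ n : ℕ, 0 < n ∧ ((DirectSum.decompose 𝒜 r g : R)) ^ n ∈ P}

/-- Graded 2-absorbing coprimary submodule. -/
def IsGr2AbsCoprimary (N : Submodule R M) : Prop :=
  N ≠ ⊥ ∧ IsGradedSubmodule ℳ N ∧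
  ∀ x y : R, (∃ g, x ∈ 𝒜 g) → (∃ g, y ∈ 𝒜 g) →
    ∀ K : Submodule R M, IsGradedSubmodule ℳ K →
      (∀ m ∈ N, (x * y) • m ∈ K) →
      x ∈ gradRad 𝒜 (K.colon N) ∨ y ∈ gradRad 𝒜 (K.colon N) ∨ x * y ∈ N.annihilator

/-- Graded 2-absorbing primary ideal. -/
def IsGr2AbsPrimaryIdeal (P : Ideal R) : Prop :=
  P ≠ ⊤ ∧ (∀ (g : G) (r : R), r ∈ P → (DirectSum.decompose 𝒜 r g : R) ∈ P) ∧
  ∀ a b c : R, (∃ g, a ∈ 𝒜 g) → (∃ g, b ∈ 𝒜 g) → (∃ g, c ∈ 𝒜 g) →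
    a * b * c ∈ P → a * b ∈ P ∨ a * c ∈ gradRad 𝒜 P ∨ b * c ∈ gradRad 𝒜 P

/-- Graded primary ideal. -/
def IsGrPrimaryIdeal (P : Ideal R) : Prop :=
  P ≠ ⊤ ∧ (∀ (g : G) (r : R), r ∈ P → (DirectSum.decompose 𝒜 r g : R) ∈ P) ∧
  ∀ a b : R, (∃ g, a ∈ 𝒜 g) → (∃ g, b ∈ 𝒜 g) →
    a * b ∈ P → a ∈ P ∨ b ∈ gradRad 𝒜 P

set_option linter.unusedSectionVars false


section Helpers

variable {G : Type} [AddGroup G] [DecidableEq G]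
variable {R : Type} [CommRing R] (𝒜 : G → AddSubgroup R) [GradedRing 𝒜]
variable {M : Type} [AddCommGroup M] [Module R M] (ℳ : G → AddSubgroup M)
  [SetLike.GradedSMul 𝒜 ℳ] [DirectSum.Decomposition ℳ]

lemma decompose_smul_left {i : G} {c : R} (hc : c ∈ 𝒜 i) (m : M) (g : G) :
    (DirectSum.decompose ℳ (c • m) (i + g) : M) = c • (DirectSum.decompose ℳ m g : M) := by
  induction m using DirectSum.Decomposition.inductionOn ℳ with
  | zero => simp
  | @homogeneous h x =>
    have hx : (x : M) ∈ ℳ h := x.2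
    by_cases hgh : h = g
    · subst hgh
      have hcx : c • (x : M) ∈ ℳ (i + h) := SetLike.GradedSMul.smul_mem hc hx
      rw [DirectSum.decompose_of_mem_same ℳ hcx, DirectSum.decompose_of_mem_same ℳ hx]
    · have hcx : c • (x : M) ∈ ℳ (i + h) := SetLike.GradedSMul.smul_mem hc hx
      rw [DirectSum.decompose_of_mem_ne ℳ hcx (fun hh => hgh (add_left_cancel hh)),
        DirectSum.decompose_of_mem_ne ℳ hx hgh, smul_zero]
  | add m m' hm hm' =>
    rw [smul_add, DirectSum.decompose_add, DirectSum.decompose_add, DirectSum.add_apply,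
      DirectSum.add_apply, AddSubgroup.coe_add, AddSubgroup.coe_add, hm, hm', smul_add]

lemma decompose_smul_right {j : G} {m : M} (hm : m ∈ ℳ j) (r : R) (g : G) :
    (DirectSum.decompose ℳ (r • m) (g + j) : M) = (DirectSum.decompose 𝒜 r g : R) • m := by
  induction r using DirectSum.Decomposition.inductionOn 𝒜 with
  | zero => simp
  | @homogeneous h x =>
    have hx : (x : R) ∈ 𝒜 h := x.2
    by_cases hgh : h = g
    · subst hgh
      have hcx : (x : R) • m ∈ ℳ (h + j) := SetLike.GradedSMul.smul_mem hx hm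
      rw [DirectSum.decompose_of_mem_same ℳ hcx, DirectSum.decompose_of_mem_same 𝒜 hx]
    · have hcx : (x : R) • m ∈ ℳ (h + j) := SetLike.GradedSMul.smul_mem hx hm
      rw [DirectSum.decompose_of_mem_ne ℳ hcx (fun hh => hgh (add_right_cancel hh)),
        DirectSum.decompose_of_mem_ne 𝒜 hx hgh, zero_smul]
  | add r r' hr hr' =>
    rw [add_smul, DirectSum.decompose_add, DirectSum.decompose_add, DirectSum.add_apply,
      DirectSum.add_apply, AddSubgroup.coe_add, AddSubgroup.coe_add, hr, hr', add_smul]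

end Helpers

variable {R₁ R₂ : Type} [CommRing R₁] [CommRing R₂]
  (𝒜₁ : G → AddSubgroup R₁) [GradedRing 𝒜₁]
  (𝒜₂ : G → AddSubgroup R₂) [GradedRing 𝒜₂]
  {M₁ M₂ : Type} [AddCommGroup M₁] [AddCommGroup M₂]
  [Module R₁ M₁] [Module R₂ M₂]
  (ℳ₁ : G → AddSubgroup M₁) [SetLike.GradedSMul 𝒜₁ ℳ₁] [DirectSum.Decomposition ℳ₁]
  (ℳ₂ : G → AddSubgroup M₂) [SetLike.GradedSMul 𝒜₂ ℳ₂] [DirectSum.Decomposition ℳ₂]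
  [GradedRing (fun g => (𝒜₁ g).prod (𝒜₂ g))]
  [Module (R₁ × R₂) (M₁ × M₂)]
  [SetLike.GradedSMul (fun g => (𝒜₁ g).prod (𝒜₂ g)) (fun g => (ℳ₁ g).prod (ℳ₂ g))]
  [DirectSum.Decomposition (fun g => (ℳ₁ g).prod (ℳ₂ g))]

theorem stmt_14
    (hsmul : ∀ (r : R₁ × R₂) (m : M₁ × M₂), r • m = (r.1 • m.1, r.2 • m.2))
    (N₁ : Submodule R₁ M₁) (hN₁ : IsGr2AbsCoprimary 𝒜₁ ℳ₁ N₁)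
    (N : Submodule (R₁ × R₂) (M₁ × M₂))
    (hNset : (N : Set (M₁ × M₂)) = (N₁ : Set M₁) ×ˢ ({0} : Set M₂)) :
    IsGr2AbsPrimaryIdeal (fun g => (𝒜₁ g).prod (𝒜₂ g)) N.annihilator := by
  classical
  -- membership characterization of the annihilator
  have hmem : ∀ r : R₁ × R₂, r ∈ N.annihilator ↔ ∀ m ∈ N₁, r.1 • m = 0 := by
    intro r
    rw [Submodule.mem_annihilator]
    constructor
    · intro h m hm
      have hmN : ((m, 0) : M₁ × M₂) ∈ N := by
        show ((m, 0) : M₁ × M₂) ∈ (N : Set (M₁ × M₂))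
        rw [hNset]; exact ⟨hm, rfl⟩
      have := h _ hmN
      rw [hsmul] at this
      exact congrArg Prod.fst this
    · intro h n hn
      have hn' : n ∈ (N : Set (M₁ × M₂)) := hn
      rw [hNset] at hn'
      obtain ⟨hn1, hn2⟩ := hn'
      have hn2' : n.2 = 0 := hn2
      rw [hsmul]
      ext
      · exact h n.1 hn1
      · simp [hn2']
  -- the first component of the decomposition in the product grading
  have fst_dec : ∀ (r : R₁ × R₂) (g : G),
      ((DirectSum.decompose (fun g => (𝒜₁ g).prod (𝒜₂ g)) r g : R₁ × R₂)).1 =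
        (DirectSum.decompose 𝒜₁ r.1 g : R₁) := by
    intro r
    induction r using DirectSum.Decomposition.inductionOn (fun g => (𝒜₁ g).prod (𝒜₂ g)) with
    | zero => simp
    | @homogeneous h x =>
      intro g
      have hx : (x : R₁ × R₂) ∈ (fun g => (𝒜₁ g).prod (𝒜₂ g)) h := x.2
      have hx1 : (x : R₁ × R₂).1 ∈ 𝒜₁ h := (AddSubgroup.mem_prod.mp hx).1
      by_cases hgh : h = g
      · subst hgh
        rw [DirectSum.decompose_of_mem_same (fun g => (𝒜₁ g).prod (𝒜₂ g)) hx,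
          DirectSum.decompose_of_mem_same 𝒜₁ hx1]
      · rw [DirectSum.decompose_of_mem_ne (fun g => (𝒜₁ g).prod (𝒜₂ g)) hx hgh,
          DirectSum.decompose_of_mem_ne 𝒜₁ hx1 hgh, Prod.fst_zero]
    | add r r' hr hr' =>
      intro g
      simp only [Prod.fst_add, DirectSum.decompose_add, DirectSum.add_apply,
        AddSubgroup.coe_add, Prod.fst_add, hr, hr']
  -- graded annihilator in M₁
  have ann_graded : ∀ (r₁ : R₁) (g : G), (∀ m ∈ N₁, r₁ • m = 0) →
      ∀ m ∈ N₁, (DirectSum.decompose 𝒜₁ r₁ g : R₁) • m = 0 := by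
    intro r₁ g hr m hm
    have key : ∀ (h : G) (x : M₁), x ∈ N₁ → x ∈ ℳ₁ h →
        (DirectSum.decompose 𝒜₁ r₁ g : R₁) • x = 0 := by
      intro h x hxN hxh
      have hd := decompose_smul_right 𝒜₁ ℳ₁ hxh r₁ g
      rw [hr x hxN] at hd
      simpa using hd.symm
    rw [← DirectSum.sum_support_decompose ℳ₁ m, Finset.smul_sum]
    refine Finset.sum_eq_zero fun h _ => ?_
    exact key h _ (hN₁.2.1 h m hm) (SetLike.coe_mem _)
  refine ⟨?_, ?_, ?_⟩
  · -- not top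
    intro htop
    have h1 : (1 : R₁ × R₂) ∈ N.annihilator := htop ▸ Submodule.mem_top
    rw [hmem] at h1
    apply hN₁.1
    rw [Submodule.eq_bot_iff]
    intro m hm
    simpa using h1 m hm
  · -- graded
    intro g r hr
    rw [hmem] at hr ⊢
    intro m hm
    rw [fst_dec r g]
    exact ann_graded r.1 g hr m hm
  · -- 2-absorbing primary
    rintro a b c ⟨ga, ha⟩ ⟨gb, hb⟩ ⟨gc, hc⟩ habc
    rw [hmem] at habc
    simp only [Prod.fst_mul] at habc
    have ha1 : a.1 ∈ 𝒜₁ ga := (AddSubgroup.mem_prod.mp ha).1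
    have hb1 : b.1 ∈ 𝒜₁ gb := (AddSubgroup.mem_prod.mp hb).1
    have hc1 : c.1 ∈ 𝒜₁ gc := (AddSubgroup.mem_prod.mp hc).1
    set K : Submodule R₁ M₁ := LinearMap.ker (LinearMap.lsmul R₁ M₁ c.1) with hK
    have hKmem : ∀ x : M₁, x ∈ K ↔ c.1 • x = 0 := fun x => by
      rw [hK, LinearMap.mem_ker, LinearMap.lsmul_apply]
    have hKgr : IsGradedSubmodule ℳ₁ K := by
      intro g m hm
      rw [hKmem] at hm ⊢
      rw [← decompose_smul_left 𝒜₁ ℳ₁ hc1 m g, hm]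
      simp
    have hcond : ∀ m ∈ N₁, (a.1 * b.1) • m ∈ K := by
      intro m hm
      rw [hKmem, smul_smul, show c.1 * (a.1 * b.1) = a.1 * b.1 * c.1 by ring]
      exact habc m hm
    have step : ∀ x : R₁ × R₂, ∀ gx : G, x ∈ (fun g => (𝒜₁ g).prod (𝒜₂ g)) gx →
        x.1 ∈ gradRad 𝒜₁ (K.colon N₁) →
        x * c ∈ gradRad (fun g => (𝒜₁ g).prod (𝒜₂ g)) N.annihilator := by
      intro x gx hxA hxrad
      have hx1 : x.1 ∈ 𝒜₁ gx := (AddSubgroup.mem_prod.mp hxA).1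
      obtain ⟨n, hn, hpow⟩ := hxrad gx
      rw [DirectSum.decompose_of_mem_same 𝒜₁ hx1] at hpow
      rw [Submodule.mem_colon] at hpow
      obtain ⟨k, rfl⟩ : ∃ k, n = k + 1 := ⟨n - 1, (Nat.succ_pred_eq_of_pos hn).symm⟩
      have hann : (x * c) ^ (k + 1) ∈ N.annihilator := by
        rw [hmem]
        intro m hm
        have h1 : c.1 • (x.1 ^ (k + 1) • m) = 0 := (hKmem _).mp (hpow m hm)
        rw [smul_smul] at h1
        have h2 : ((x * c) ^ (k + 1)).1 = c.1 ^ k * (c.1 * x.1 ^ (k + 1)) := by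
          rw [Prod.pow_fst, Prod.fst_mul]
          ring
        rw [h2, ← smul_smul, h1, smul_zero]
      have hxc : x * c ∈ (fun g => (𝒜₁ g).prod (𝒜₂ g)) (gx + gc) :=
        SetLike.mul_mem_graded (A := fun g => (𝒜₁ g).prod (𝒜₂ g)) hxA hc
      intro g
      by_cases hg : gx + gc = g
      · subst hg
        rw [DirectSum.decompose_of_mem_same (fun g => (𝒜₁ g).prod (𝒜₂ g)) hxc]
        exact ⟨k + 1, Nat.succ_pos _, hann⟩
      · exact ⟨1, Nat.one_pos, by
          rw [DirectSum.decompose_of_mem_ne (fun g => (𝒜₁ g).prod (𝒜₂ g)) hxc hg, pow_one]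
          exact zero_mem _⟩
    rcases hN₁.2.2 a.1 b.1 ⟨ga, ha1⟩ ⟨gb, hb1⟩ K hKgr hcond with hGa | hGb | hAB
    · exact Or.inr (Or.inl (step a ga ha hGa))
    · exact Or.inr (Or.inr (step b gb hb hGb))
    · refine Or.inl ?_
      rw [hmem]
      intro m hm
      rw [Prod.fst_mul]
      exact Submodule.mem_annihilator.mp hAB m hm
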